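/- (Matrix Wirtinger inequality) Let W be a symmetric positive semidefinite n×n matrix and f : [a,b] → R^n continuously differentiable with f(a) = 0. Then ∫_a^b f(t)' W f(t) dt ≤ (4(b−a)²/π²) ∫_a^b f'(t)' W f'(t) dt. -/

import Mathlib

open Matrix intervalIntegral

open Real in
private lemma wirt_tan_sq {x : ℝ} (h : Real.cos x ≠ 0) :
    1 + Real.tan x ^ 2 = 1 / Real.cos x ^ 2 := by
  rw [Real.tan_eq_sin_div_cos]; field_simp; exact Real.cos_sq_add_sin_sq x

open Real Set MeasureTheory in
private lemma wirt_core (a b c : ℝ) (hab : a < b) (hc : a < c) (hcb : c ≤ b)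
    (g g' : ℝ → ℝ)
    (hg : ∀ t ∈ Icc a b, HasDerivWithinAt g (g' t) (Icc a b) t)
    (hg'c : ContinuousOn g' (Icc a b)) :
    (π / (2 * (b - a))) ^ 2 * ∫ t in c..b, g t ^ 2
      ≤ (∫ t in c..b, g' t ^ 2)
        + (π / (2 * (b - a))) * Real.tan ((π / (2 * (b - a))) * (b - c)) * g c ^ 2 := by
  set k := π / (2 * (b - a)) with hk
  have hba : (0:ℝ) < b - a := by linarith
  have hkpos : 0 < k := by rw [hk]; positivity
  have hkba : k * (b - a) = π / 2 := by rw [hk]; field_simp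
  have hcos : ∀ t ∈ Icc c b, 0 < Real.cos (k * (b - t)) := by
    intro t ht
    apply Real.cos_pos_of_mem_Ioo
    constructor
    · have h1 : 0 ≤ k * (b - t) := mul_nonneg hkpos.le (by linarith [ht.2])
      have := Real.pi_pos
      linarith
    · have h2 : k * (b - t) < k * (b - a) :=
        mul_lt_mul_of_pos_left (by linarith [ht.1]) hkpos
      rw [hkba] at h2; exact h2
  set ψ : ℝ → ℝ := fun t => k * Real.tan (k * (b - t)) with hψ
  set F : ℝ → ℝ := fun t => ψ t * g t ^ 2 with hF
  set F' : ℝ → ℝ := fun t =>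
    (-(k ^ 2 + ψ t ^ 2)) * g t ^ 2 + ψ t * (2 * g t * g' t) with hF'
  have hgc : ContinuousOn g (Icc a b) := fun t ht => (hg t ht).continuousWithinAt
  have hsub : Icc c b ⊆ Icc a b := Icc_subset_Icc hc.le le_rfl
  have hgc' : ContinuousOn g (Icc c b) := hgc.mono hsub
  have hg'c' : ContinuousOn g' (Icc c b) := hg'c.mono hsub
  -- derivative of ψ
  have hψd : ∀ t ∈ Icc c b, HasDerivAt ψ (-(k ^ 2 + ψ t ^ 2)) t := by
    intro t ht
    have hlin : HasDerivAt (fun t : ℝ => k * (b - t)) (-k) t := by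
      simpa using ((hasDerivAt_id t).const_sub b).const_mul k
    have htan : HasDerivAt (fun t : ℝ => Real.tan (k * (b - t)))
        ((1 / Real.cos (k * (b - t)) ^ 2) * (-k)) t :=
      by have := (Real.hasDerivAt_tan (x := k * (b - t)) (hcos t ht).ne').comp t hlin; exact this
    have hres := htan.const_mul k
    have hval : k * ((1 / Real.cos (k * (b - t)) ^ 2) * (-k)) = -(k ^ 2 + ψ t ^ 2) := by
      rw [← wirt_tan_sq (hcos t ht).ne']
      simp only [hψ]
      ring
    rw [hval] at hres
    exact hres
  have hψc : ContinuousOn ψ (Icc c b) :=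
    fun t ht => (hψd t ht).continuousAt.continuousWithinAt
  -- derivative of F at interior points
  have hFd : ∀ t ∈ Ioo c b, HasDerivAt F (F' t) t := by
    intro t ht
    have htI : t ∈ Icc a b := ⟨by linarith [ht.1], ht.2.le⟩
    have hgd : HasDerivAt g (g' t) t :=
      (hg t htI).hasDerivAt (Icc_mem_nhds (by linarith [ht.1]) ht.2)
    have hmul := (hψd t ⟨ht.1.le, ht.2.le⟩).mul (hgd.pow 2)
    have hval : -(k ^ 2 + ψ t ^ 2) * g t ^ 2 + ψ t * ((2:ℕ) * g t ^ (2 - 1) * g' t)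
        = F' t := by
      simp only [hF']
      push_cast
      ring
    rw [show (g ^ 2) t = g t ^ 2 from rfl, hval] at hmul
    exact hmul
  have hFcont : ContinuousOn F (Icc c b) := hψc.mul (hgc'.pow 2)
  have hF'cont : ContinuousOn F' (Icc c b) := by
    apply ContinuousOn.add
    · exact (continuousOn_const.add (hψc.pow 2)).neg.mul (hgc'.pow 2)
    · exact hψc.mul ((continuousOn_const.mul hgc').mul hg'c')
  have hintF' : IntervalIntegrable F' volume c b := by
    apply ContinuousOn.intervalIntegrable
    rwa [uIcc_of_le hcb]
  have hFTC : ∫ t in c..b, F' t = F b - F c :=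
    integral_eq_sub_of_hasDeriv_right_of_le hcb hFcont
      (fun t ht => (hFd t ht).hasDerivWithinAt) hintF'
  have hFb : F b = 0 := by simp [hF, hψ]
  have hg2 : IntervalIntegrable (fun t => g t ^ 2) volume c b := by
    apply ContinuousOn.intervalIntegrable
    rw [uIcc_of_le hcb]; exact hgc'.pow 2
  have hg'2 : IntervalIntegrable (fun t => g' t ^ 2) volume c b := by
    apply ContinuousOn.intervalIntegrable
    rw [uIcc_of_le hcb]; exact hg'c'.pow 2
  have hpt : 0 ≤ ∫ t in c..b, (g' t ^ 2 - k ^ 2 * g t ^ 2 - F' t) := by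
    apply integral_nonneg hcb
    intro u hu
    have hid : g' u ^ 2 - k ^ 2 * g u ^ 2 - F' u = (g' u - ψ u * g u) ^ 2 := by
      simp only [hF']; ring
    rw [hid]; positivity
  have hsplit : ∫ t in c..b, (g' t ^ 2 - k ^ 2 * g t ^ 2 - F' t)
      = (∫ t in c..b, g' t ^ 2) - k ^ 2 * (∫ t in c..b, g t ^ 2) - (F b - F c) := by
    rw [integral_sub (hg'2.sub (hg2.const_mul _)) hintF',
        integral_sub hg'2 (hg2.const_mul _), intervalIntegral.integral_const_mul, hFTC]
  rw [hsplit, hFb] at hpt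
  have hFc : F c = k * Real.tan (k * (b - c)) * g c ^ 2 := by simp [hF, hψ]
  rw [hFc] at hpt
  linarith

set_option maxHeartbeats 1000000 in
open Real Set MeasureTheory in
private lemma wirt_scalar (a b : ℝ) (hab : a < b) (g g' : ℝ → ℝ)
    (hg : ∀ t ∈ Icc a b, HasDerivWithinAt g (g' t) (Icc a b) t)
    (hg'c : ContinuousOn g' (Icc a b)) (hga : g a = 0) :
    (π / (2 * (b - a))) ^ 2 * ∫ t in a..b, g t ^ 2 ≤ ∫ t in a..b, g' t ^ 2 := by
  set k := π / (2 * (b - a)) with hk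
  have hba : (0:ℝ) < b - a := by linarith
  have hkpos : 0 < k := by rw [hk]; positivity
  have hkba : k * (b - a) = π / 2 := by rw [hk]; field_simp
  have hgc : ContinuousOn g (Icc a b) := fun t ht => (hg t ht).continuousWithinAt
  obtain ⟨M0, hM0⟩ := isCompact_Icc.exists_bound_of_continuousOn hg'c
  set M := max M0 0 with hM
  have hMnn : 0 ≤ M := le_max_right _ _
  have hM' : ∀ x ∈ Icc a b, ‖g' x‖ ≤ M := fun x hx => (hM0 x hx).trans (le_max_left _ _)
  obtain ⟨B0, hB0⟩ := isCompact_Icc.exists_bound_of_continuousOn hgc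
  set B := max B0 0 with hB
  have hBnn : 0 ≤ B := le_max_right _ _
  have hB' : ∀ x ∈ Icc a b, ‖g x‖ ≤ B := fun x hx => (hB0 x hx).trans (le_max_left _ _)
  have hlip : ∀ t ∈ Icc a b, |g t| ≤ M * (t - a) := by
    intro t ht
    have h1 := Convex.norm_image_sub_le_of_norm_hasDerivWithin_le hg hM'
      (convex_Icc a b) (left_mem_Icc.2 hab.le) ht
    rw [hga, sub_zero] at h1
    have h2 : ‖t - a‖ = t - a := by
      rw [Real.norm_eq_abs, abs_of_nonneg]; linarith [ht.1]
    rw [h2] at h1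
    exact h1
  set C := k ^ 2 * B ^ 2 + M ^ 2 + 1 with hC
  have hCpos : 0 < C := by positivity
  have key : ∀ ε : ℝ, 0 < ε → ε < b - a →
      k ^ 2 * ∫ t in a..b, g t ^ 2 ≤ (∫ t in a..b, g' t ^ 2) + C * ε := by
    intro ε hε hεb
    set c := a + ε with hc
    have hac : a < c := by rw [hc]; linarith
    have hcb : c ≤ b := by rw [hc]; linarith
    have hcI : c ∈ Icc a b := ⟨hac.le, hcb⟩
    have core := wirt_core a b c hab hac hcb g g' hg hg'c
    rw [← hk] at core
    -- bound the tangent term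
    have hbc : k * (b - c) = π / 2 - k * ε := by rw [hc, ← hkba]; ring
    have hkε : k * ε < π / 2 := by
      have := mul_lt_mul_of_pos_left hεb hkpos
      rwa [hkba] at this
    have hkεpos : 0 < k * ε := by positivity
    have htanpos : 0 < Real.tan (k * ε) :=
      Real.tan_pos_of_pos_of_lt_pi_div_two hkεpos hkε
    have hψcb : k * Real.tan (k * (b - c)) ≤ 1 / ε := by
      rw [hbc, Real.tan_pi_div_two_sub]
      have h1 : k * ε ≤ Real.tan (k * ε) := (Real.lt_tan hkεpos hkε).le
      have h2 : (Real.tan (k * ε))⁻¹ ≤ (k * ε)⁻¹ := by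
        apply inv_anti₀ hkεpos h1
      calc k * (Real.tan (k * ε))⁻¹ ≤ k * (k * ε)⁻¹ :=
            mul_le_mul_of_nonneg_left h2 hkpos.le
        _ = 1 / ε := by field_simp
    have hψnn : 0 ≤ k * Real.tan (k * (b - c)) := by
      apply mul_nonneg hkpos.le
      apply Real.tan_nonneg_of_nonneg_of_le_pi_div_two
      · rw [hbc]; linarith
      · rw [hbc]; linarith
    have hgc2 : g c ^ 2 ≤ M ^ 2 * ε ^ 2 := by
      have h1 := hlip c hcI
      have h2 : c - a = ε := by rw [hc]; ring
      rw [h2] at h1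
      nlinarith [abs_nonneg (g c), sq_abs (g c)]
    have hterm : k * Real.tan (k * (b - c)) * g c ^ 2 ≤ M ^ 2 * ε := by
      have h3 : k * Real.tan (k * (b - c)) * g c ^ 2 ≤ (1 / ε) * (M ^ 2 * ε ^ 2) :=
        mul_le_mul hψcb hgc2 (sq_nonneg _) (by positivity)
      have h4 : (1 / ε) * (M ^ 2 * ε ^ 2) = M ^ 2 * ε := by field_simp
      linarith
    -- split the integrals
    have hInt2 : IntervalIntegrable (fun t => g t ^ 2) volume a c := by
      apply ContinuousOn.intervalIntegrable
      rw [uIcc_of_le hac.le]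
      exact (hgc.mono (Icc_subset_Icc le_rfl hcb)).pow 2
    have hInt2' : IntervalIntegrable (fun t => g t ^ 2) volume c b := by
      apply ContinuousOn.intervalIntegrable
      rw [uIcc_of_le hcb]
      exact (hgc.mono (Icc_subset_Icc hac.le le_rfl)).pow 2
    have hInt3 : IntervalIntegrable (fun t => g' t ^ 2) volume a c := by
      apply ContinuousOn.intervalIntegrable
      rw [uIcc_of_le hac.le]
      exact (hg'c.mono (Icc_subset_Icc le_rfl hcb)).pow 2
    have hInt3' : IntervalIntegrable (fun t => g' t ^ 2) volume c b := by
      apply ContinuousOn.intervalIntegrable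
      rw [uIcc_of_le hcb]
      exact (hg'c.mono (Icc_subset_Icc hac.le le_rfl)).pow 2
    have hsplitg : ∫ t in a..b, g t ^ 2 = (∫ t in a..c, g t ^ 2) + ∫ t in c..b, g t ^ 2 :=
      (integral_add_adjacent_intervals hInt2 hInt2').symm
    have hsplitg' : ∫ t in a..b, g' t ^ 2 = (∫ t in a..c, g' t ^ 2) + ∫ t in c..b, g' t ^ 2 :=
      (integral_add_adjacent_intervals hInt3 hInt3').symm
    have hbound1 : ∫ t in a..c, g t ^ 2 ≤ B ^ 2 * ε := by
      have h5 : ∀ x ∈ Set.uIoc a c, ‖g x ^ 2‖ ≤ B ^ 2 := by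
        intro x hx
        rw [Set.uIoc_of_le hac.le] at hx
        have hxI : x ∈ Icc a b := ⟨hx.1.le, hx.2.trans hcb⟩
        have := hB' x hxI
        rw [Real.norm_eq_abs] at this ⊢
        rw [abs_of_nonneg (sq_nonneg _)]
        nlinarith [abs_nonneg (g x), sq_abs (g x)]
      have h6 := intervalIntegral.norm_integral_le_of_norm_le_const h5
      rw [Real.norm_eq_abs] at h6
      have h7 : |c - a| = ε := by rw [hc]; rw [abs_of_nonneg] <;> linarith
      rw [h7] at h6
      exact (le_abs_self _).trans h6
    have hbound2 : 0 ≤ ∫ t in a..c, g' t ^ 2 :=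
      integral_nonneg hac.le (fun u _ => sq_nonneg _)
    have hmul1 : k ^ 2 * ∫ t in a..c, g t ^ 2 ≤ k ^ 2 * (B ^ 2 * ε) :=
      mul_le_mul_of_nonneg_left hbound1 (sq_nonneg _)
    have hCε : (k ^ 2 * B ^ 2 + M ^ 2) * ε ≤ C * ε := by
      apply mul_le_mul_of_nonneg_right _ hε.le
      rw [hC]; linarith
    have hsg : k ^ 2 * ∫ t in a..b, g t ^ 2
        = k ^ 2 * (∫ t in a..c, g t ^ 2) + k ^ 2 * ∫ t in c..b, g t ^ 2 := by
      rw [hsplitg]; ring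
    linarith [core, hsg, hsplitg', hterm, hmul1, hbound2, hCε]
  apply le_of_forall_pos_le_add
  intro η hη
  set ε := min (η / C) ((b - a) / 2) with hε
  have hε1 : 0 < ε := lt_min (div_pos hη hCpos) (by linarith)
  have hε2 : ε < b - a := (min_le_right _ _).trans_lt (by linarith)
  have hkey := key ε hε1 hε2
  have hCε : C * ε ≤ η := by
    calc C * ε ≤ C * (η / C) := mul_le_mul_of_nonneg_left (min_le_left _ _) hCpos.le
      _ = η := by field_simp
  linarith

/-- Matrix Wirtinger inequality: for `W = Wᵀ ⪰ 0` and `f` C¹ on `[a,b]` with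
`f(a) = 0`, `∫_a^b f'Wf ≤ (4(b−a)²/π²) ∫_a^b ḟ'Wḟ`. -/
theorem matrix_wirtinger_inequality {n : ℕ} (a b : ℝ) (hab : a ≤ b)
    (W : Matrix (Fin n) (Fin n) ℝ) (hWsymm : W.IsSymm) (hWpsd : W.PosSemidef)
    (f : ℝ → (Fin n → ℝ))
    (hf : ContDiffOn ℝ 1 f (Set.Icc a b)) (hfa : f a = 0) :
    ∫ t in a..b, f t ⬝ᵥ W *ᵥ f t
      ≤ (4 * (b - a) ^ 2 / Real.pi ^ 2) *
        ∫ t in a..b,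
          derivWithin f (Set.Icc a b) t ⬝ᵥ W *ᵥ derivWithin f (Set.Icc a b) t := by
  rcases eq_or_lt_of_le hab with rfl | hab'
  · simp
  · have hba : (0:ℝ) < b - a := by linarith
    set S := (open scoped MatrixOrder in CFC.sqrt W) with hS
    have hSS : S * S = W := open scoped MatrixOrder in CFC.sqrt_mul_sqrt_self W hWpsd.nonneg
    have hSsymm : Sᵀ = S := open scoped MatrixOrder in (CFC.sqrt_nonneg W).posSemidef.1
    have quad : ∀ v : Fin n → ℝ, v ⬝ᵥ W *ᵥ v = ∑ i, (S *ᵥ v) i ^ 2 := by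
      intro v
      have h1 : v ⬝ᵥ W *ᵥ v = (S *ᵥ v) ⬝ᵥ (S *ᵥ v) := by
        rw [← hSS, ← Matrix.mulVec_mulVec, Matrix.dotProduct_mulVec,
          ← Matrix.mulVec_transpose, hSsymm]
      rw [h1]
      simp [dotProduct, pow_two]
    set dw := derivWithin f (Set.Icc a b) with hdw
    have hfdiff : DifferentiableOn ℝ f (Set.Icc a b) := hf.differentiableOn one_ne_zero
    have hfd : ∀ t ∈ Set.Icc a b, HasDerivWithinAt f (dw t) (Set.Icc a b) t :=
      fun t ht => (hfdiff t ht).hasDerivWithinAt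
    have hdwc : ContinuousOn dw (Set.Icc a b) :=
      hf.continuousOn_derivWithin (uniqueDiffOn_Icc hab') le_rfl
    set g : Fin n → ℝ → ℝ := fun i t => (S *ᵥ f t) i with hg
    set g' : Fin n → ℝ → ℝ := fun i t => (S *ᵥ dw t) i with hg'
    have hge : ∀ i, g i = fun x => ∑ j, S i j * f x j := by
      intro i; funext x; simp [hg, Matrix.mulVec, dotProduct]
    have hg'e : ∀ i, g' i = fun x => ∑ j, S i j * dw x j := by
      intro i; funext x; simp [hg', Matrix.mulVec, dotProduct]
    have hgderiv : ∀ i, ∀ t ∈ Set.Icc a b, HasDerivWithinAt (g i) (g' i t) (Set.Icc a b) t := by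
      intro i t ht
      have hv := hasDerivWithinAt_pi.1 (hfd t ht)
      have hsum : HasDerivWithinAt (fun x => ∑ j, S i j * f x j)
          (∑ j, S i j * dw t j) (Set.Icc a b) t :=
        HasDerivWithinAt.fun_sum (fun j _ => (hv j).const_mul (S i j))
      rw [hge i, hg'e i]
      exact hsum
    have hg'cont : ∀ i, ContinuousOn (g' i) (Set.Icc a b) := by
      intro i
      rw [hg'e i]
      exact continuousOn_finset_sum _ fun j _ =>
        continuousOn_const.mul ((continuous_apply j).comp_continuousOn hdwc)
    have hga0 : ∀ i, g i a = 0 := by intro i; simp [hg, hfa]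
    have hgcont : ∀ i, ContinuousOn (g i) (Set.Icc a b) :=
      fun i t ht => ((hgderiv i) t ht).continuousWithinAt
    have hscal : ∀ i, (Real.pi / (2 * (b - a))) ^ 2 * ∫ t in a..b, g i t ^ 2
        ≤ ∫ t in a..b, g' i t ^ 2 :=
      fun i => wirt_scalar a b hab' (g i) (g' i) (hgderiv i) (hg'cont i) (hga0 i)
    have hL : ∫ t in a..b, f t ⬝ᵥ W *ᵥ f t = ∑ i, ∫ t in a..b, g i t ^ 2 := by
      have heq : (fun t => f t ⬝ᵥ W *ᵥ f t) = fun t => ∑ i, g i t ^ 2 := by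
        funext t; rw [quad]
      rw [heq, intervalIntegral.integral_finset_sum]
      intro i _
      apply ContinuousOn.intervalIntegrable
      rw [Set.uIcc_of_le hab]
      exact (hgcont i).pow 2
    have hR : ∫ t in a..b, dw t ⬝ᵥ W *ᵥ dw t = ∑ i, ∫ t in a..b, g' i t ^ 2 := by
      have heq : (fun t => dw t ⬝ᵥ W *ᵥ dw t) = fun t => ∑ i, g' i t ^ 2 := by
        funext t; rw [quad]
      rw [heq, intervalIntegral.integral_finset_sum]
      intro i _
      apply ContinuousOn.intervalIntegrable
      rw [Set.uIcc_of_le hab]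
      exact (hg'cont i).pow 2
    rw [hL, hR]
    have hsum : (Real.pi / (2 * (b - a))) ^ 2 * ∑ i, ∫ t in a..b, g i t ^ 2
        ≤ ∑ i, ∫ t in a..b, g' i t ^ 2 := by
      rw [Finset.mul_sum]
      exact Finset.sum_le_sum fun i _ => hscal i
    have hk2 : (0:ℝ) < (Real.pi / (2 * (b - a))) ^ 2 := by
      have := Real.pi_pos; positivity
    have hcoef : 4 * (b - a) ^ 2 / Real.pi ^ 2 = ((Real.pi / (2 * (b - a))) ^ 2)⁻¹ := by
      rw [div_pow]
      rw [inv_div]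
      congr 1
      ring
    rw [hcoef]
    have hfin := mul_le_mul_of_nonneg_left hsum (inv_nonneg.2 hk2.le)
    rw [← mul_assoc, inv_mul_cancel₀ hk2.ne', one_mul] at hfin
    exact hfin
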